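/- With the Bernoulli(q)-walk notation, if liminf_n b_n/n < q/p then almost surely there exists k with S(k) > b_{1+X(k)}, i.e., the stopping time τ = inf{k : S(k) > b_{1+X(k)}} is almost surely finite. -/

import Mathlib

open MeasureTheory ProbabilityTheory

/-- `walkS X k ω` is the number of up-moves (`true`s) among the first `k+1` coordinates. -/
def walkS {Ω : Type*} (X : ℕ → Ω → Bool) (k : ℕ) (ω : Ω) : ℕ :=
  ∑ j ∈ Finset.range (k + 1), (X j ω).toNat

/-- `walkX X k ω = k - walkS X k ω` is the horizontal coordinate of the lattice path
(started at `(-1,0)`) after `k+1` steps. -/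
def walkX {Ω : Type*} (X : ℕ → Ω → Bool) (k : ℕ) (ω : Ω) : ℤ :=
  (k : ℤ) - (walkS X k ω : ℤ)

section Aux

open Filter

lemma hit_lemma (x : ℕ → ℕ) (hstep : ∀ k, x (k+1) ≤ x k + 1) (h0 : x 0 ≤ 1)
    (n : ℕ) (hn : 1 ≤ n) (hex : ∃ k, n ≤ x k) : ∃ k, x k = n := by
  classical
  refine ⟨Nat.find hex, ?_⟩
  have hfind := Nat.find_spec hex
  rcases Nat.eq_zero_or_pos (Nat.find hex) with h | h
  · rw [h] at hfind ⊢; omega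
  · obtain ⟨m, hm⟩ : ∃ m, Nat.find hex = m + 1 := ⟨Nat.find hex - 1, by omega⟩
    have hm' : ¬ n ≤ x m := Nat.find_min hex (by omega)
    have := hstep m
    rw [hm] at hfind ⊢
    omega

lemma det_lemma (q θ : ℝ) (hq0 : 0 < q) (hq1 : q < 1) (hθ0 : 0 < θ) (hθ : θ * (1 - q) < q)
    (s : ℕ → ℕ) (hs : ∀ k, s k ≤ k + 1) (hstep : ∀ k, s k ≤ s (k+1) ∧ s (k+1) ≤ s k + 1)
    (hlim : Tendsto (fun k => (s k : ℝ)/(k+1)) atTop (nhds q))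
    (b : ℕ → ℕ) (hfreq : ∀ N : ℕ, ∃ n, N ≤ n ∧ (b n : ℝ) < θ * n) :
    ∃ k, b (k + 1 - s k) < s k := by
  set x : ℕ → ℕ := fun k => k + 1 - s k with hx
  have hxstep : ∀ k, x (k+1) ≤ x k + 1 := fun k => by
    have := hstep k; have := hs k; simp only [hx]; omega
  have hx0 : x 0 ≤ 1 := by simp [hx]
  have hxcast : ∀ k, (x k : ℝ) = (k+1) - s k := by
    intro k; have := hs k; simp only [hx]; push_cast [Nat.cast_sub this]; ring
  have hxtop : Tendsto x atTop atTop := by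
    rw [← tendsto_natCast_atTop_iff (R := ℝ)]
    have h1 : Tendsto (fun k : ℕ => (1 - (s k : ℝ)/(k+1)) * (k+1)) atTop atTop := by
      apply Filter.Tendsto.pos_mul_atTop (by linarith : (0:ℝ) < 1 - q)
      · exact (tendsto_const_nhds.sub hlim)
      · exact tendsto_atTop_add_const_right _ 1 tendsto_natCast_atTop_atTop
    apply h1.congr'
    filter_upwards [eventually_gt_atTop 0] with k hk
    have hk1 : (0:ℝ) < (k:ℝ) + 1 := by positivity
    rw [hxcast k]; field_simp
  set ε : ℝ := (q - θ * (1-q)) / (θ + 2) with hε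
  have hε0 : 0 < ε := by apply div_pos <;> linarith
  have hεD : ε * (θ + 2) = q - θ * (1-q) := by rw [hε]; field_simp
  have hkey : θ * (1 - q + ε) < q - ε := by nlinarith
  have hball := hlim (Metric.ball_mem_nhds q hε0)
  rw [Filter.mem_map, Filter.mem_atTop_sets] at hball
  obtain ⟨K, hK⟩ := hball
  obtain ⟨n, hnK, hnb⟩ := hfreq (K + 1)
  obtain ⟨k, hkn⟩ := hit_lemma x hxstep hx0 n (by omega)
    ((hxtop.eventually_ge_atTop n).exists)
  have hxle : x k ≤ k + 1 := Nat.sub_le _ _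
  have hkK : K ≤ k := by omega
  have hks := hK k hkK
  simp only [Set.mem_preimage, Metric.mem_ball, Real.dist_eq, abs_lt] at hks
  have hk1 : (0:ℝ) < (k:ℝ) + 1 := by positivity
  have hsk_lb : (q - ε) * (k+1) ≤ (s k : ℝ) := by
    have := hks.1
    rw [div_sub' (ne_of_gt hk1), lt_div_iff₀ hk1] at this
    nlinarith
  have hsk_ub : (s k : ℝ) ≤ (q + ε) * (k+1) := by
    have := hks.2
    rw [div_sub' (ne_of_gt hk1), div_lt_iff₀ hk1] at this
    nlinarith
  have hn_ub : (n:ℝ) ≤ (1 - q + ε) * (k+1) := by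
    have := hxcast k
    rw [hkn] at this
    nlinarith
  have hfin : (b n : ℝ) < (s k : ℝ) := by
    have h1 : (b n : ℝ) < θ * n := hnb
    have h2 : θ * (n:ℝ) ≤ θ * ((1 - q + ε) * (k+1)) :=
      mul_le_mul_of_nonneg_left hn_ub (le_of_lt hθ0)
    have h3 : θ * ((1 - q + ε) * (k+1)) < (q - ε) * (k+1) := by nlinarith
    linarith
  exact ⟨k, by rw [← hkn] at hfin; exact_mod_cast hfin⟩

lemma bool_set_classify (s : Set Bool) :
    s = ∅ ∨ s = {true} ∨ s = {false} ∨ s = Set.univ := by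
  by_cases ht : true ∈ s <;> by_cases hf : false ∈ s
  · right; right; right; ext b; cases b <;> simp [ht, hf]
  · right; left; ext b; cases b <;> simp [ht, hf]
  · right; right; left; ext b; cases b <;> simp [ht, hf]
  · left; ext b; cases b <;> simp [ht, hf]

lemma bool_map_eq {Ω : Type*} [MeasurableSpace Ω] (μ : Measure Ω) [IsProbabilityMeasure μ]
    (c : ENNReal) (f g : Ω → Bool) (hf : Measurable f) (hg : Measurable g)
    (hfq : μ {ω | f ω = true} = c) (hgq : μ {ω | g ω = true} = c) :
    Measure.map f μ = Measure.map g μ := by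
  have hpre : ∀ (h : Ω → Bool), h ⁻¹' ({true} : Set Bool) = {ω | h ω = true} ∧
      h ⁻¹' ({false} : Set Bool) = {ω | h ω = true}ᶜ := by
    intro h
    constructor <;> ext ω <;> cases hh : h ω <;> simp [hh]
  have hcompl : ∀ (h : Ω → Bool), Measurable h →
      μ {ω | h ω = true}ᶜ = 1 - μ {ω | h ω = true} := by
    intro h hh
    have hm : MeasurableSet {ω | h ω = true} := (hpre h).1 ▸ hh (measurableSet_singleton true)
    rw [measure_compl hm (measure_ne_top μ _)]
    simp [measure_univ]
  ext s hs
  rw [Measure.map_apply hf hs, Measure.map_apply hg hs]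
  rcases bool_set_classify s with h | h | h | h <;> subst h
  · simp
  · rw [(hpre f).1, (hpre g).1, hfq, hgq]
  · rw [(hpre f).2, (hpre g).2, hcompl f hf, hcompl g hg, hfq, hgq]
  · rw [Set.preimage_univ, Set.preimage_univ]

lemma slln_bool {Ω : Type*} [MeasurableSpace Ω] (μ : Measure Ω) [IsProbabilityMeasure μ]
    (q : ℝ) (hq0 : 0 ≤ q)
    (X : ℕ → Ω → Bool) (hmeas : ∀ i, Measurable (X i))
    (hindep : iIndepFun X μ)
    (hdist : ∀ i, μ {ω | X i ω = true} = ENNReal.ofReal q)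
    (hmap : ∀ i, Measure.map (X i) μ = Measure.map (X 0) μ) :
    ∀ᵐ ω ∂μ, Tendsto (fun n : ℕ => (∑ i ∈ Finset.range n, ((X i ω).toNat : ℝ)) / n)
      atTop (nhds q) := by
  set Y : ℕ → Ω → ℝ := fun i ω => ((X i ω).toNat : ℝ) with hY
  have mf : Measurable (fun b : Bool => (b.toNat : ℝ)) := measurable_of_countable _
  have hYmeas : ∀ i, Measurable (Y i) := fun i => mf.comp (hmeas i)
  have hint : Integrable (Y 0) μ := by
    apply (integrable_const (1:ℝ)).mono' (hYmeas 0).aestronglyMeasurable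
    filter_upwards with ω
    simp only [hY, Real.norm_eq_abs]
    cases X 0 ω <;> norm_num
  have hpind : Pairwise (Function.onFun (IndepFun · · μ) Y) := by
    intro i j hij
    exact (hindep.indepFun hij).comp mf mf
  have hident : ∀ i, IdentDistrib (Y i) (Y 0) μ μ := by
    intro i
    have hXid : IdentDistrib (X i) (X 0) μ μ :=
      ⟨(hmeas i).aemeasurable, (hmeas 0).aemeasurable, hmap i⟩
    exact hXid.comp mf
  have hE : μ[Y 0] = q := by
    have hind : Y 0 = Set.indicator {ω | X 0 ω = true} (fun _ => (1:ℝ)) := by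
      ext ω
      by_cases h : X 0 ω = true <;> simp [hY, h, Set.indicator]
    have hm : MeasurableSet {ω | X 0 ω = true} := by
      have : {ω | X 0 ω = true} = X 0 ⁻¹' {true} := by ext ω; simp
      rw [this]; exact (hmeas 0) (measurableSet_singleton true)
    rw [hind, MeasureTheory.integral_indicator_const _ hm, measureReal_def, hdist 0]
    simp [ENNReal.toReal_ofReal hq0]
  have := strong_law_ae_real Y hint hpind hident
  rw [hE] at this
  exact this

lemma extract_theta (q p : ℝ) (hp0 : 0 < p) (b : ℕ → ℕ)
    (hθ : Filter.liminf (fun n : ℕ => (((b n : ℝ) / n : ℝ) : EReal)) Filter.atTop <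
      ((q / p : ℝ) : EReal)) :
    ∃ θ : ℝ, 0 < θ ∧ θ * p < q ∧ ∀ N : ℕ, ∃ n, N ≤ n ∧ (b n : ℝ) < θ * n := by
  set f : ℕ → EReal := fun n : ℕ => (((b n : ℝ) / n : ℝ) : EReal) with hf
  have hnn : (0 : EReal) ≤ liminf f atTop := by
    refine Filter.le_liminf_of_le (by isBoundedDefault) (Filter.Eventually.of_forall fun n => ?_)
    exact EReal.coe_nonneg.2 (by positivity)
  obtain ⟨c, hc1, hc2⟩ := exists_between hθ
  have hc0 : (0 : EReal) < c := lt_of_le_of_lt hnn hc1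
  have hctop : c ≠ ⊤ := (hc2.trans_le le_top).ne
  have hcbot : c ≠ ⊥ := (lt_of_le_of_lt bot_le hc0).ne'
  set θ : ℝ := c.toReal with hθdef
  have hcθ : ((θ : ℝ) : EReal) = c := EReal.coe_toReal hctop hcbot
  refine ⟨θ, ?_, ?_, ?_⟩
  · have : ((0:ℝ) : EReal) < (θ : EReal) := by rw [hcθ]; exact_mod_cast hc0
    exact_mod_cast this
  · have hθq : θ < q / p := by
      have : ((θ:ℝ) : EReal) < ((q/p : ℝ) : EReal) := by rw [hcθ]; exact hc2
      exact_mod_cast this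
    exact (lt_div_iff₀ hp0).1 hθq
  · intro N
    have hfr : ∃ᶠ n in atTop, f n < c := frequently_lt_of_liminf_lt (by isBoundedDefault) hc1
    obtain ⟨n, hn, hlt⟩ := (hfr.and_eventually (eventually_ge_atTop (max N 1))).exists
    refine ⟨n, le_trans (le_max_left _ _) hlt, ?_⟩
    have hn1 : 1 ≤ n := le_trans (le_max_right _ _) hlt
    have h2 : (((b n : ℝ) / n : ℝ) : EReal) < c := hn
    rw [← hcθ] at h2
    have : ((b n : ℝ) / n) < θ := EReal.coe_lt_coe_iff.1 h2
    have hnpos : (0:ℝ) < n := by exact_mod_cast hn1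
    calc (b n : ℝ) = (b n : ℝ) / n * n := by field_simp
    _ < θ * n := by exact mul_lt_mul_of_pos_right this hnpos

lemma ae_mem_measure_eq_one {Ω : Type*} [MeasurableSpace Ω] (μ : Measure Ω)
    [IsProbabilityMeasure μ] (S : Set Ω) (h : ∀ᵐ ω ∂μ, ω ∈ S) : μ S = 1 := by
  have h0 : μ Sᶜ = 0 := by rw [ae_iff] at h; exact h
  refine le_antisymm prob_le_one ?_
  calc (1:ENNReal) = μ (S ∪ Sᶜ) := by rw [Set.union_compl_self, measure_univ]
  _ ≤ μ S + μ Sᶜ := measure_union_le _ _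
  _ = μ S := by rw [h0, add_zero]

end Aux

theorem stmt_15 {Ω : Type*} [MeasurableSpace Ω] (μ : Measure Ω) [IsProbabilityMeasure μ]
    (q : ℝ) (hq : q ∈ Set.Ioo (0 : ℝ) 1) (p : ℝ) (hp : p = 1 - q)
    (X : ℕ → Ω → Bool) (hmeas : ∀ i, Measurable (X i))
    (hindep : iIndepFun X μ)
    (hdist : ∀ i, μ {ω | X i ω = true} = ENNReal.ofReal q)
    (b : ℕ → ℕ) (hb : Monotone b)
    (hθ : Filter.liminf (fun n : ℕ => (((b n : ℝ) / n : ℝ) : EReal)) Filter.atTop <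
      ((q / p : ℝ) : EReal)) :
    μ {ω | ∃ k : ℕ, b (1 + walkX X k ω).toNat < walkS X k ω} = 1 := by
  obtain ⟨hq0, hq1⟩ := hq
  have hp0 : 0 < p := by rw [hp]; linarith
  obtain ⟨θ, hθ0, hθp, hfreq⟩ := extract_theta q p hp0 b hθ
  rw [hp] at hθp
  have hmap : ∀ i, Measure.map (X i) μ = Measure.map (X 0) μ := fun i =>
    bool_map_eq μ (ENNReal.ofReal q) (X i) (X 0) (hmeas i) (hmeas 0) (hdist i) (hdist 0)
  have hae := slln_bool μ q hq0.le X hmeas hindep hdist hmap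
  apply ae_mem_measure_eq_one
  filter_upwards [hae] with ω hω
  -- basic facts about walkS
  have hs : ∀ k, walkS X k ω ≤ k + 1 := by
    intro k
    calc walkS X k ω ≤ ∑ _j ∈ Finset.range (k+1), 1 :=
          Finset.sum_le_sum (fun j _ => by cases X j ω <;> simp)
    _ = k + 1 := by simp
  have hstep : ∀ k, walkS X k ω ≤ walkS X (k+1) ω ∧ walkS X (k+1) ω ≤ walkS X k ω + 1 := by
    intro k
    have : walkS X (k+1) ω = walkS X k ω + (X (k+1) ω).toNat := by
      rw [walkS, walkS, Finset.sum_range_succ]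
    have h1 : (X (k+1) ω).toNat ≤ 1 := by cases X (k+1) ω <;> simp
    omega
  have hlim : Filter.Tendsto (fun k => (walkS X k ω : ℝ)/(k+1)) Filter.atTop (nhds q) := by
    have hcomp := hω.comp (Filter.tendsto_add_atTop_nat 1)
    apply hcomp.congr
    intro k
    simp only [Function.comp_apply, walkS]
    push_cast
    ring_nf
  obtain ⟨k, hk⟩ := det_lemma q θ hq0 hq1 hθ0 hθp (fun k => walkS X k ω) hs hstep hlim b hfreq
  refine ⟨k, ?_⟩
  have hidx : (1 + walkX X k ω).toNat = k + 1 - walkS X k ω := by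
    have := hs k
    rw [walkX]
    omega
  rw [hidx]
  exact hk
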